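/- Let p > q > 0 be coprime integers with Bezout chain (p₀, q₀), …, (p_n, q_n), set dᵢ = p_{i−1} − pᵢ for 1 ≤ i ≤ n, and let r₀, …, r_k be integers with rᵢ ≤ −2 for all i and [r₀, …, r_k]⁻ = −p/q. Then the sequence (d₁, …, d_n) is weakly decreasing, and {1, …, n} is partitioned into consecutive intervals I_k, I_{k−1}, …, I₀ (in this order, some possibly empty) with |I_k| = −r_k − 1 and |I_j| = −r_j − 2 for 0 ≤ j < k, such that dᵢ is constant on each interval and the constant values on distinct nonempty intervals are pairwise distinct (strictly decreasing from I_k to I₀). -/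

import Mathlib

/-- Negative continued fraction value `[r₀, …, r_k]⁻`:
`[r_k]⁻ = r_k` and `[r_j, …, r_k]⁻ = r_j − 1/[r_{j+1}, …, r_k]⁻`. -/
def ncf : List ℤ → ℚ
  | [] => 0
  | [r] => (r : ℚ)
  | r :: rest => (r : ℚ) - 1 / ncf rest

/-- `(p′, q′)` is the Bezout successor of `(p, q)`:
`p q′ − q p′ = 1`, `0 < p′ < p`, `0 < q′ ≤ q`. -/
def BezoutNext (p q p' q' : ℤ) : Prop :=
  p * q' - q * p' = 1 ∧ 0 < p' ∧ p' < p ∧ 0 < q' ∧ q' ≤ q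

/-- `P 0 = (p, q), …, P n = (1, 1)` is the Bezout chain of `(p, q)`: each step
is the Bezout successor, and `(1, 1)` is reached exactly at step `n`. -/
def IsBezoutChain (p q : ℤ) (n : ℕ) (P : ℕ → ℤ × ℤ) : Prop :=
  P 0 = (p, q) ∧ P n = (1, 1) ∧ (∀ i < n, P i ≠ (1, 1)) ∧
  ∀ i < n, BezoutNext (P i).1 (P i).2 (P (i + 1)).1 (P (i + 1)).2

/-- With `dᵢ = p_{i−1} − pᵢ` along the Bezout chain of `(p, q)`, and
`[r₀, …, r_k]⁻ = −p/q` with all `rᵢ ≤ −2`: the sequence `(d₁, …, d_n)` is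
weakly decreasing, and `{1, …, n}` is partitioned into consecutive intervals
`I_k, I_{k−1}, …, I₀` (in this order, some possibly empty; interval `I_j` is
`(c (j+1), c j]`) with `|I_k| = −r_k − 1` and `|I_j| = −r_j − 2` for `j < k`,
such that `d` is constant on each interval (value `v j` on `I_j`) and the
values on distinct nonempty intervals are strictly decreasing from `I_k`
to `I₀`. -/
def ND : (ℕ → ℤ) → ℕ → ℤ × ℤ
  | r, 0 => (-r 0, 1)
  | r, (k+1) => ((-r 0) * (ND (fun i => r (i+1)) k).1 - (ND (fun i => r (i+1)) k).2,
      (ND (fun i => r (i+1)) k).1)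

lemma ND_pos : ∀ (k : ℕ) (r : ℕ → ℤ), (∀ i ≤ k, r i ≤ -2) →
    0 < (ND r k).2 ∧ (ND r k).2 < (ND r k).1 ∧ IsCoprime (ND r k).1 (ND r k).2 := by
  intro k
  induction k with
  | zero =>
    intro r hr
    have h0 := hr 0 le_rfl
    refine ⟨one_pos, by simpa [ND] using by linarith, ?_⟩
    simp only [ND]
    exact isCoprime_one_right
  | succ k ih =>
    intro r hr
    have h0 := hr 0 (Nat.zero_le _)
    obtain ⟨h1, h2, h3⟩ := ih (fun i => r (i+1)) (fun i hi => hr (i+1) (by omega))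
    set N := (ND (fun i => r (i+1)) k).1 with hN
    set D := (ND (fun i => r (i+1)) k).2 with hD
    refine ⟨by simpa [ND] using by linarith, ?_, ?_⟩
    · show N < (-r 0) * N - D
      nlinarith
    · show IsCoprime ((-r 0) * N - D) N
      obtain ⟨u, v, huv⟩ := h3
      exact ⟨-v, u + v * (-r 0), by ring_nf; linarith [huv]⟩

lemma ncf_eq : ∀ (k : ℕ) (r : ℕ → ℤ), (∀ i ≤ k, r i ≤ -2) →
    ncf (List.ofFn fun i : Fin (k+1) => r i.1) = -((ND r k).1 : ℚ) / ((ND r k).2 : ℚ) := by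
  intro k
  induction k with
  | zero =>
    intro r hr
    simp [List.ofFn_succ, ncf, ND]
  | succ k ih =>
    intro r hr
    have h0 := hr 0 (Nat.zero_le _)
    obtain ⟨h1, h2, _⟩ := ND_pos k (fun i => r (i+1)) (fun i hi => hr (i+1) (by omega))
    have htail := ih (fun i => r (i+1)) (fun i hi => hr (i+1) (by omega))
    set N := (ND (fun i => r (i+1)) k).1 with hN
    set D := (ND (fun i => r (i+1)) k).2 with hD
    rw [List.ofFn_succ]
    simp only [Fin.val_zero]
    have hlist : (List.ofFn fun i : Fin (k+1) => r ((i.succ : Fin (k+2))).1)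
        = List.ofFn fun i : Fin (k+1) => r (i.1+1) := by
      congr 1
    have hcons : ∃ b l, (List.ofFn fun i : Fin (k+1) => r (i.1+1)) = b :: l := by
      rw [List.ofFn_succ]; exact ⟨_, _, rfl⟩
    obtain ⟨b, l, hbl⟩ := hcons
    rw [hlist, hbl]
    have : ncf (r 0 :: b :: l) = (r 0 : ℚ) - 1 / ncf (b :: l) := rfl
    rw [this, ← hbl, htail]
    have hNz : (0:ℤ) < N := by linarith
    have hN0 : (N : ℚ) ≠ 0 := Int.cast_ne_zero.mpr hNz.ne'
    have hD0 : (D : ℚ) ≠ 0 := Int.cast_ne_zero.mpr h1.ne'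
    show (r 0 : ℚ) - 1 / (-(N:ℚ)/(D:ℚ)) = -((((-r 0) * N - D : ℤ)) : ℚ) / ((N : ℤ) : ℚ)
    field_simp
    push_cast
    ring

lemma bezoutNext_unique {p q a b a' b' : ℤ} (hq : 0 < q)
    (h1 : BezoutNext p q a b) (h2 : BezoutNext p q a' b') : a = a' ∧ b = b' := by
  obtain ⟨d1, _, _, hb1, hb1'⟩ := h1
  obtain ⟨d2, _, _, hb2, hb2'⟩ := h2
  have hco : IsCoprime q p := ⟨-a, b, by linarith⟩
  have hdvd : q ∣ p * (b - b') := ⟨a - a', by linarith⟩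
  have hqd : q ∣ (b - b') := hco.dvd_of_dvd_mul_left hdvd
  have hbb : b - b' = 0 := by
    rcases hqd with ⟨t, ht⟩
    have : t = 0 := by nlinarith
    simp [ht, this]
  have hb : b = b' := by linarith
  constructor
  · have : q * a = q * a' := by nlinarith
    exact mul_left_cancel₀ hq.ne' this
  · exact hb

lemma chain_unique {p q : ℤ} {n m : ℕ} {C P : ℕ → ℤ × ℤ} (hq : 0 < q)
    (h1 : IsBezoutChain p q n C) (h2 : IsBezoutChain p q m P) :
    n = m ∧ ∀ i ≤ n, C i = P i := by
  obtain ⟨hC0, hCn, hCne, hCstep⟩ := h1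
  obtain ⟨hP0, hPm, hPne, hPstep⟩ := h2
  have aux : ∀ i, i ≤ n → i ≤ m → C i = P i ∧ 0 < (C i).2 := by
    intro i
    induction i with
    | zero => intro _ _; rw [hC0, hP0]; exact ⟨rfl, hq⟩
    | succ i ih =>
      intro hin him
      obtain ⟨heq, hpos⟩ := ih (by omega) (by omega)
      have s1 := hCstep i (by omega)
      have s2 := hPstep i (by omega)
      rw [heq] at s1 hpos
      obtain ⟨ha, hb⟩ := bezoutNext_unique hpos s1 s2
      refine ⟨Prod.ext ha hb, ?_⟩
      rw [Prod.ext ha hb]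
      exact s2.2.2.2.1
  have hnm : n = m := by
    by_contra hne
    rcases Nat.lt_or_ge n m with h | h
    · exact hPne n h (by rw [← (aux n le_rfl h.le).1]; exact hCn)
    · have hmn : m < n := by omega
      exact hCne m hmn (by rw [(aux m hmn.le le_rfl).1]; exact hPm)
  exact ⟨hnm, fun i hi => (aux i hi (hnm ▸ hi)).1⟩

def CBase (a : ℤ) (i : ℕ) : ℤ × ℤ := (a - (i : ℤ), 1)

def CExt (a : ℤ) (nt : ℕ) (Ct : ℕ → ℤ × ℤ) (i : ℕ) : ℤ × ℤ :=
  if i ≤ nt then (a * (Ct i).1 - (Ct i).2, (Ct i).1)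
  else (a - 1 - ((i - nt : ℕ) : ℤ), 1)

def cExt (n : ℕ) (ct : ℕ → ℕ) : ℕ → ℕ
  | 0 => n
  | j+1 => ct j

def vExt (x : ℤ) (f : ℕ → ℤ) : ℕ → ℤ
  | 0 => x
  | j+1 => f j

lemma main : ∀ (k : ℕ) (r : ℕ → ℤ), (∀ i ≤ k, r i ≤ -2) →
    ∃ (n : ℕ) (C : ℕ → ℤ × ℤ) (c : ℕ → ℕ) (vp vq : ℕ → ℤ),
      IsBezoutChain (ND r k).1 (ND r k).2 n C ∧
      c (k+1) = 0 ∧ c 0 = n ∧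
      (∀ j ≤ k, (c j : ℤ) = (c (j+1) : ℤ) + (if j = k then -r k - 1 else -r j - 2)) ∧
      (∀ j ≤ k, ∀ i, c (j+1) < i → i ≤ c j →
         (C (i-1)).1 - (C i).1 = vp j ∧ (C (i-1)).2 - (C i).2 = vq j) ∧
      vp 0 = 1 ∧ vq 0 = 0 ∧
      (∀ j ≤ k, vq j < vp j) ∧
      (∀ j' j, j' < j → j ≤ k → vq j' < vq j ∧ vq j - vq j' ≤ vp j - vp j') ∧
      (∀ i ≤ n, 0 < (C i).2 ∧ (C i).2 ≤ (C i).1 ∧ (i < n → 1 < (C i).1)) := by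
  intro k
  induction k with
  | zero =>
    intro r hr
    have h0 : r 0 ≤ -2 := hr 0 le_rfl
    set n : ℕ := (-r 0 - 1).toNat with hndef
    have hn : (n : ℤ) = -r 0 - 1 := Int.toNat_of_nonneg (by linarith)
    refine ⟨n, CBase (-r 0), cExt n (fun _ => 0), vExt 1 (fun _ => 1), vExt 0 (fun _ => 0),
      ⟨?_, ?_, ?_, ?_⟩, by simp [cExt], by simp [cExt], ?_, ?_, rfl, rfl, ?_, ?_, ?_⟩
    · simp [CBase, ND]
    · simp only [CBase]
      have : -r 0 - (n : ℤ) = 1 := by omega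
      rw [this]
    · intro i hi h
      simp only [CBase, Prod.mk.injEq] at h
      have : (i : ℤ) < n := by exact_mod_cast hi
      omega
    · intro i hi
      simp only [CBase]
      have h1 : (i : ℤ) + 1 ≤ n := by exact_mod_cast hi
      refine ⟨by push_cast; ring, by push_cast; omega, by push_cast; omega, one_pos, le_rfl⟩
    · intro j hj
      interval_cases j
      norm_num [cExt]
      omega
    · intro j hj i hlow hhigh
      interval_cases j
      simp only [cExt] at hlow hhigh
      simp only [CBase, vExt]
      constructor
      · omega
      · norm_num
    · intro j hj
      interval_cases j
      simp [vExt]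
    · intro j' j hj' hj; omega
    · intro i hi
      simp only [CBase]
      have h1 : (i : ℤ) ≤ n := by exact_mod_cast hi
      refine ⟨one_pos, by omega, fun h => ?_⟩
      have : (i : ℤ) < n := by exact_mod_cast h
      omega
  | succ k ih =>
    intro r hr
    have h0 : r 0 ≤ -2 := hr 0 (Nat.zero_le _)
    obtain ⟨nt, Ct, ct, vpt, vqt, ⟨hCt0, hCtn, hCtne, hCtstep⟩, hcttop, hct0, hct3, hct4,
      hvp0, hvq0, hI2, hI3, hinv⟩ := ih (fun i => r (i+1)) (fun i hi => hr (i+1) (by omega))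
    have ha2 : 2 ≤ -r 0 := by linarith
    set m : ℕ := (-r 0 - 2).toNat with hmdef
    have hm : (m : ℤ) = -r 0 - 2 := Int.toNat_of_nonneg (by linarith)
    set n : ℕ := nt + m with hndef
    have hvp_pos : ∀ j ≤ k, 1 ≤ vpt j := by
      intro j hj
      rcases Nat.eq_zero_or_pos j with h | h
      · rw [h, hvp0]
      · obtain ⟨hq, hd⟩ := hI3 0 j h hj
        rw [hvq0, hvp0] at *
        omega
    have hvq_nonneg : ∀ j ≤ k, 0 ≤ vqt j := by
      intro j hj
      rcases Nat.eq_zero_or_pos j with h | h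
      · rw [h, hvq0]
      · obtain ⟨hq, _⟩ := hI3 0 j h hj
        rw [hvq0] at hq; omega
    have hct_step_le : ∀ j ≤ k, ct (j+1) ≤ ct j := by
      intro j hj
      have h3 := hct3 j hj
      by_cases hjk : j = k
      · rw [if_pos hjk] at h3
        have := hr (k+1) le_rfl
        omega
      · rw [if_neg hjk] at h3
        have := hr (j+1) (by omega)
        omega
    have hct_le : ∀ j ≤ k+1, ct j ≤ nt := by
      intro j hj
      induction j with
      | zero => rw [hct0]
      | succ j ihj =>
        calc ct (j+1) ≤ ct j := hct_step_le j (by omega)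
        _ ≤ nt := ihj (by omega)
    refine ⟨n, CExt (-r 0) nt Ct, cExt n ct,
      vExt 1 (fun j => -r 0 * vpt j - vqt j), vExt 0 vpt,
      ⟨?_, ?_, ?_, ?_⟩, by simp [cExt, hcttop], by simp [cExt], ?_, ?_, rfl, rfl, ?_, ?_, ?_⟩
    · -- C 0 = ND r (k+1)
      simp only [CExt, if_pos (Nat.zero_le nt), hCt0]
      rfl
    · -- C n = (1,1)
      simp only [CExt]
      by_cases hmn : n ≤ nt
      · have hnnt : n = nt := by omega
        have ha : -r 0 = 2 := by omega
        rw [if_pos hmn, hnnt, hCtn, ha]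
        norm_num
      · rw [if_neg hmn]
        have h1 : ((n - nt : ℕ) : ℤ) = m := by omega
        rw [h1]
        have h2 : -r 0 - 1 - (m : ℤ) = 1 := by omega
        rw [h2]
    · -- no early (1,1)
      intro i hi h
      simp only [CExt] at h
      by_cases hile : i ≤ nt
      · rw [if_pos hile] at h
        obtain ⟨hw, hwu, hlt⟩ := hinv i hile
        simp only [Prod.mk.injEq] at h
        obtain ⟨h1, h2⟩ := h
        rw [h2, mul_one] at h1
        rw [h2] at hwu
        rcases Nat.lt_or_ge i nt with hc | hc
        · have := hlt hc
          omega
        · have hieq : i = nt := by omega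
          omega
      · rw [if_neg hile] at h
        simp only [Prod.mk.injEq] at h
        obtain ⟨h1, _⟩ := h
        have hii : (i : ℤ) < n := by exact_mod_cast hi
        have hc : ((i - nt : ℕ) : ℤ) = (i : ℤ) - nt := by omega
        omega
    · -- steps
      intro i hi
      simp only [CExt]
      by_cases h1 : i + 1 ≤ nt
      · have hi' : i < nt := by omega
        obtain ⟨sdet, su', suu, sw', sww⟩ := hCtstep i hi'
        obtain ⟨hw, hwu, _⟩ := hinv i (by omega)
        obtain ⟨hw', hwu', _⟩ := hinv (i+1) h1
        rw [if_pos (le_of_lt hi'), if_pos h1]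
        dsimp only
        have hu : 0 < (Ct i).1 := lt_of_lt_of_le hw hwu
        have hnn : (0:ℤ) ≤ -r 0 - 2 := by linarith
        refine ⟨by linear_combination sdet, ?_, ?_, su', le_of_lt suu⟩
        · have := mul_nonneg hnn (le_of_lt su')
          nlinarith
        · have key : (Ct i).1 * ((Ct i).2 - (Ct (i+1)).2)
              = (Ct i).2 * ((Ct i).1 - (Ct (i+1)).1) - 1 := by linear_combination -sdet
          have k2 : (Ct i).2 * ((Ct i).1 - (Ct (i+1)).1)
              ≤ (Ct i).1 * ((Ct i).1 - (Ct (i+1)).1) :=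
            mul_le_mul_of_nonneg_right hwu (by omega)
          have k3 : (Ct i).1 * ((Ct i).2 - (Ct (i+1)).2)
              < (Ct i).1 * ((Ct i).1 - (Ct (i+1)).1) := by linarith
          have k4 : (Ct i).2 - (Ct (i+1)).2 < (Ct i).1 - (Ct (i+1)).1 :=
            lt_of_mul_lt_mul_left k3 (le_of_lt hu)
          have k5 := mul_nonneg hnn (by omega : (0:ℤ) ≤ (Ct i).1 - (Ct (i+1)).1)
          nlinarith
      · by_cases h2 : i ≤ nt
        · have hint : i = nt := by omega
          have hmpos : 0 < m := by omega
          rw [if_pos h2, if_neg h1, hint, hCtn]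
          dsimp only
          have hc : ((nt + 1 - nt : ℕ) : ℤ) = 1 := by omega
          rw [hc]
          refine ⟨by ring, by omega, by omega, one_pos, le_rfl⟩
        · have hnt : nt < i := by omega
          rw [if_neg h2, if_neg (by omega : ¬ (i + 1 ≤ nt))]
          dsimp only
          have hibound : (i : ℤ) + 1 ≤ n := by exact_mod_cast hi
          have hc1 : ((i + 1 - nt : ℕ) : ℤ) = (i : ℤ) - nt + 1 := by omega
          have hc2 : ((i - nt : ℕ) : ℤ) = (i : ℤ) - nt := by omega
          rw [hc1, hc2]
          refine ⟨by ring, by omega, by omega, one_pos, le_rfl⟩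
    · -- block sizes
      intro j hj
      rcases j with _ | t
      · simp only [cExt]
        rw [if_neg (by omega : ¬ (0 = k + 1)), hct0]
        omega
      · have ht : t ≤ k := by omega
        have h3 := hct3 t ht
        simp only [cExt]
        by_cases htk : t = k
        · subst htk
          rw [if_pos rfl] at h3
          rw [if_pos rfl]
          exact h3
        · rw [if_neg htk] at h3
          rw [if_neg (by omega : ¬ (t + 1 = k + 1))]
          exact h3
    · -- block values
      intro j hj i hlow hhigh
      rcases j with _ | t
      · simp only [cExt] at hlow hhigh
        rw [hct0] at hlow
        have hi1 : 1 ≤ i := by omega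
        simp only [CExt, vExt]
        rw [if_neg (by omega : ¬ (i ≤ nt))]
        by_cases hieq : i = nt + 1
        · rw [if_pos (by omega : i - 1 ≤ nt), (by omega : i - 1 = nt), hCtn]
          have hc : ((i - nt : ℕ) : ℤ) = 1 := by omega
          rw [hc]
          constructor <;> norm_num
        · rw [if_neg (by omega : ¬ (i - 1 ≤ nt))]
          have hc1 : ((i - 1 - nt : ℕ) : ℤ) = (i : ℤ) - 1 - nt := by omega
          have hc2 : ((i - nt : ℕ) : ℤ) = (i : ℤ) - nt := by omega
          rw [hc1, hc2]
          constructor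
          · push_cast
            ring
          · norm_num
      · have ht : t ≤ k := by omega
        simp only [cExt] at hlow hhigh
        have hint : i ≤ nt := le_trans hhigh (hct_le t (by omega))
        have hi1 : 1 ≤ i := by omega
        obtain ⟨hd1, hd2⟩ := hct4 t ht i hlow hhigh
        simp only [CExt, vExt]
        rw [if_pos hint, if_pos (by omega : i - 1 ≤ nt)]
        exact ⟨by linear_combination (-r 0) * hd1 - hd2, hd1⟩
    · -- I2
      intro j hj
      rcases j with _ | t
      · simp [vExt]
      · have ht : t ≤ k := by omega
        simp only [vExt]
        have h2 := hI2 t ht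
        have h1 := hvp_pos t ht
        have := mul_nonneg (by linarith : (0:ℤ) ≤ -r 0 - 2) (by linarith : (0:ℤ) ≤ vpt t)
        nlinarith
    · -- I3
      intro j' j hj' hj
      rcases j with _ | t
      · omega
      · have ht : t ≤ k := by omega
        rcases j' with _ | s
        · simp only [vExt]
          have h2 := hI2 t ht
          have h1 := hvp_pos t ht
          have hp := mul_nonneg (by linarith : (0:ℤ) ≤ -r 0 - 2) (by linarith : (0:ℤ) ≤ vpt t)
          constructor
          · omega
          · nlinarith
        · have hs : s < t := by omega
          simp only [vExt]
          obtain ⟨hq, hd⟩ := hI3 s t hs ht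
          have hp := mul_nonneg (by linarith : (0:ℤ) ≤ -r 0 - 2)
            (by omega : (0:ℤ) ≤ vpt t - vpt s)
          constructor
          · omega
          · nlinarith
    · -- positivity invariant
      intro i hi
      simp only [CExt]
      by_cases hile : i ≤ nt
      · obtain ⟨hw, hwu, hlt⟩ := hinv i hile
        rw [if_pos hile]
        dsimp only
        have hnn := mul_nonneg (by linarith : (0:ℤ) ≤ -r 0 - 2)
          (by linarith : (0:ℤ) ≤ (Ct i).1)
        refine ⟨by linarith, by nlinarith, fun hlt2 => ?_⟩
        rcases Nat.lt_or_ge i nt with hc | hc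
        · have := hlt hc
          nlinarith
        · have hieq : i = nt := by omega
          have hmpos : 0 < m := by omega
          have h1 : (Ct i).1 = 1 := by rw [hieq, hCtn]
          have h2 : (Ct i).2 = 1 := by rw [hieq, hCtn]
          rw [h1, h2, mul_one]
          omega
      · rw [if_neg hile]
        dsimp only
        have hin : (i : ℤ) ≤ n := by exact_mod_cast hi
        have hc : ((i - nt : ℕ) : ℤ) = (i : ℤ) - nt := by omega
        refine ⟨one_pos, by omega, fun h => ?_⟩
        have : (i : ℤ) < n := by exact_mod_cast h
        omega

theorem stmt8 (p q : ℤ) (hq : 0 < q) (hqp : q < p) (hco : Int.gcd p q = 1)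
    (n : ℕ) (P : ℕ → ℤ × ℤ) (hchain : IsBezoutChain p q n P)
    (d : ℕ → ℤ) (hd : ∀ i, 1 ≤ i → i ≤ n → d i = (P (i - 1)).1 - (P i).1)
    (k : ℕ) (r : ℕ → ℤ) (hr : ∀ i ≤ k, r i ≤ -2)
    (hval : ncf (List.ofFn fun i : Fin (k + 1) => r i.1) = -(p : ℚ) / (q : ℚ)) :
    (∀ i, 1 ≤ i → i + 1 ≤ n → d (i + 1) ≤ d i) ∧
    ∃ c : ℕ → ℕ, ∃ v : ℕ → ℤ,
      c (k + 1) = 0 ∧ c 0 = n ∧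
      (∀ j ≤ k, (c j : ℤ) = (c (j + 1) : ℤ) +
        (if j = k then -r k - 1 else -r j - 2)) ∧
      (∀ j ≤ k, ∀ i, c (j + 1) < i → i ≤ c j → d i = v j) ∧
      (∀ j j', j ≤ k → j' < j →
        c (j + 1) < c j → c (j' + 1) < c j' → v j' < v j) := by
  obtain ⟨hD, hDN, hcop⟩ := ND_pos k r hr
  have hv := ncf_eq k r hr
  have hEq : -(((ND r k).1 : ℤ) : ℚ) / (((ND r k).2 : ℤ) : ℚ) = -(p : ℚ) / (q : ℚ) := by
    rw [← hv, hval]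
  have hq0 : ((q : ℤ) : ℚ) ≠ 0 := Int.cast_ne_zero.mpr hq.ne'
  have hD0 : (((ND r k).2 : ℤ) : ℚ) ≠ 0 := Int.cast_ne_zero.mpr hD.ne'
  have hcross : (ND r k).1 * q = p * (ND r k).2 := by
    have h := hEq
    field_simp at h
    have h2 : (((ND r k).1 * q : ℤ) : ℚ) = ((p * (ND r k).2 : ℤ) : ℚ) := by push_cast; linarith
    exact_mod_cast h2
  have hp0 : 0 < p := lt_trans hq hqp
  have hpN : p = (ND r k).1 := by
    have hco' : IsCoprime p q := Int.isCoprime_iff_gcd_eq_one.mpr hco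
    have h1 : p ∣ (ND r k).1 * q := ⟨(ND r k).2, hcross.symm ▸ rfl⟩
    have h2 : p ∣ (ND r k).1 := (hco'.dvd_of_dvd_mul_right) h1
    have h3 : (ND r k).1 ∣ p * (ND r k).2 := ⟨q, hcross.symm⟩
    have h4 : (ND r k).1 ∣ p := hcop.dvd_of_dvd_mul_right h3
    exact Int.dvd_antisymm (le_of_lt hp0) (by linarith) h2 h4 ▸ rfl
  have hqD : q = (ND r k).2 := by
    have hN0 : (ND r k).1 ≠ 0 := by linarith
    have : (ND r k).1 * q = (ND r k).1 * (ND r k).2 := by rw [hcross, hpN]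
    exact mul_left_cancel₀ hN0 this
  obtain ⟨n0, C, c, vp, vq, hch, hctop, hc0, h3, h4, hvp0, hvq0, hI2, hI3, hinvC⟩ :=
    main k r hr
  rw [← hpN, ← hqD] at hch
  obtain ⟨hnn, hCP⟩ := chain_unique hq hch hchain
  -- n0 = n
  have hvmono : ∀ j' j, j' < j → j ≤ k → vp j' < vp j := by
    intro j' j h hj
    obtain ⟨a, b⟩ := hI3 j' j h hj
    omega
  have hstep : ∀ j ≤ k, c (j+1) ≤ c j := by
    intro j hj
    have h := h3 j hj
    by_cases hjk : j = k
    · rw [if_pos hjk] at h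
      have := hr k le_rfl
      omega
    · rw [if_neg hjk] at h
      have := hr j hj
      omega
  have hanti : ∀ s t, s ≤ t → t ≤ k + 1 → c t ≤ c s := by
    intro s t hst htk
    induction t with
    | zero =>
      have : s = 0 := Nat.le_zero.mp hst
      rw [this]
    | succ t iht =>
      rcases Nat.lt_or_ge s (t+1) with h | h
      · calc c (t+1) ≤ c t := hstep t (by omega)
        _ ≤ c s := iht (by omega) (by omega)
      · have : s = t + 1 := by omega
        rw [this]
  have hcle : ∀ j ≤ k + 1, c j ≤ n0 := by
    intro j hj
    calc c j ≤ c 0 := hanti 0 j (Nat.zero_le _) hj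
    _ = n0 := hc0
  have hdblock : ∀ j ≤ k, ∀ i, c (j+1) < i → i ≤ c j → d i = vp j := by
    intro j hj i h1 h2
    have hi1 : 1 ≤ i := by omega
    have hin : i ≤ n0 := le_trans h2 (hcle j (by omega))
    rw [hd i hi1 (by omega)]
    rw [← hCP (i-1) (by omega), ← hCP i hin]
    exact (h4 j hj i h1 h2).1
  have hcover : ∀ i, 1 ≤ i → i ≤ n0 → ∃ j, j ≤ k ∧ c (j+1) < i ∧ i ≤ c j := by
    intro i h1 h2
    set j := Nat.findGreatest (fun j => i ≤ c j) k with hjdef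
    have hP0 : i ≤ c 0 := by rw [hc0]; exact h2
    have hspec : i ≤ c j := Nat.findGreatest_spec (P := fun j => i ≤ c j) (Nat.zero_le k) hP0
    have hjk : j ≤ k := Nat.findGreatest_le k
    refine ⟨j, hjk, ?_, hspec⟩
    rcases eq_or_lt_of_le hjk with he | hl
    · rw [he, hctop]; omega
    · have hng := Nat.findGreatest_is_greatest (P := fun j => i ≤ c j) (Nat.lt_succ_self j) (by omega : j + 1 ≤ k)
      simp only [not_le] at hng
      exact hng
  constructor
  · intro i h1 h2
    have h2' : i + 1 ≤ n0 := by omega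
    obtain ⟨j1, hj1k, hj1l, hj1r⟩ := hcover i h1 (by omega)
    obtain ⟨j2, hj2k, hj2l, hj2r⟩ := hcover (i+1) (by omega) h2'
    have hj21 : j2 ≤ j1 := by
      by_contra hcon
      have h5 : j1 + 1 ≤ j2 := by omega
      have := hanti (j1+1) j2 h5 (by omega)
      omega
    rw [hdblock j1 hj1k i hj1l hj1r, hdblock j2 hj2k (i+1) hj2l hj2r]
    rcases eq_or_lt_of_le hj21 with he | hl
    · rw [he]
    · exact le_of_lt (hvmono j2 j1 hl hj1k)
  · refine ⟨c, vp, hctop, by rw [hc0, hnn], h3, hdblock, ?_⟩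
    intro j j' hj hj' _ _
    exact hvmono j' j hj' hj
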